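/- arXiv:2211.08994 — 2 statements merged into one kernel-verified Lean document; each statement's English description precedes it below -/
import Mathlib

section
/- If A ⊆ ℕ is an IP* set and m ∈ ℕ, then the dilated set m·A = { m·a : a ∈ A } is also an IP* set. -/
/-- `FS ⟨xₙ⟩` : all finite sums `Σ_{t ∈ H} x_t` over nonempty finite `H ⊆ ℕ`. -/
def FS (x : ℕ → ℕ) : Set ℕ :=
  { y | ∃ H : Finset ℕ, H.Nonempty ∧ y = ∑ t ∈ H, x t }

/-- `S` is an IP set (in the positive integers) if it contains `FS ⟨xₙ⟩` for some
sequence of positive integers `⟨xₙ⟩`. -/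
def IPSet (S : Set ℕ) : Prop :=
  ∃ x : ℕ → ℕ, (∀ n, 0 < x n) ∧ FS x ⊆ S

/-- `A` is IP* if it meets every IP set. -/
def IPStar (A : Set ℕ) : Prop :=
  ∀ S : Set ℕ, IPSet S → (A ∩ S).Nonempty

/-- If `A ⊆ ℕ` is an IP* set and `m` is a positive integer, then the dilate
`m·A = {m·a : a ∈ A}` is also an IP* set. -/
theorem IPStar_smul (A : Set ℕ) (hA : IPStar A) (m : ℕ) (hm : 0 < m) :
    IPStar ((fun a => m * a) '' A) := by
  intro S hS
  obtain ⟨x, hx, hFS⟩ := hS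
  classical
  set P : ℕ → ℕ := fun n => ∑ t ∈ Finset.range n, x t with hP
  -- pigeonhole: some residue class of partial sums is infinite
  have hpigeon : ∃ r : Fin m, {k : ℕ | (⟨P k % m, Nat.mod_lt _ hm⟩ : Fin m) = r}.Infinite := by
    obtain ⟨r, hr⟩ := Finite.exists_infinite_fiber (fun k : ℕ => (⟨P k % m, Nat.mod_lt _ hm⟩ : Fin m))
    exact ⟨r, Set.infinite_coe_iff.mp hr⟩
  obtain ⟨r, hr⟩ := hpigeon
  haveI : Infinite ({k : ℕ | (⟨P k % m, Nat.mod_lt _ hm⟩ : Fin m) = r} : Set ℕ) :=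
    Set.infinite_coe_iff.mpr hr
  set e := Nat.orderEmbeddingOfSet {k : ℕ | (⟨P k % m, Nat.mod_lt _ hm⟩ : Fin m) = r}
  have he : ∀ k, P (e k) % m = r.val := by
    intro k
    have : e k ∈ {k : ℕ | (⟨P k % m, Nat.mod_lt _ hm⟩ : Fin m) = r} := by
      have := Nat.orderEmbeddingOfSet_range
        {k : ℕ | (⟨P k % m, Nat.mod_lt _ hm⟩ : Fin m) = r}
      rw [← this]; exact ⟨k, rfl⟩
    simpa [Fin.ext_iff] using this
  have hmono : StrictMono e := e.strictMono
  -- block sums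
  set y : ℕ → ℕ := fun k => ∑ t ∈ Finset.Ico (e k) (e (k + 1)), x t with hy
  have hlt : ∀ k, e k < e (k + 1) := fun k => hmono (Nat.lt_succ_self k)
  have hysum : ∀ k, P (e k) + y k = P (e (k + 1)) := by
    intro k
    simpa [hP, hy] using (Finset.sum_range_add_sum_Ico x (le_of_lt (hlt k)))
  have hdvd : ∀ k, m ∣ y k := by
    intro k
    have h1 : P (e k) % m = P (e (k + 1)) % m := by rw [he, he]
    have h2 := hysum k
    have hle : P (e k) ≤ P (e (k + 1)) := by omega
    have := (Nat.modEq_iff_dvd' hle).mp h1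
    have heq : P (e (k + 1)) - P (e k) = y k := by omega
    rwa [heq] at this
  have hypos : ∀ k, 0 < y k := by
    intro k
    apply Finset.sum_pos (fun t _ => hx t)
    exact ⟨e k, Finset.mem_Ico.mpr ⟨le_refl _, hlt k⟩⟩
  set z : ℕ → ℕ := fun k => y k / m with hz
  have hzy : ∀ k, m * z k = y k := fun k => Nat.mul_div_cancel' (hdvd k) ..
  have hzpos : ∀ k, 0 < z k :=
    fun k => Nat.div_pos (Nat.le_of_dvd (hypos k) (hdvd k)) hm
  -- FS y ⊆ FS x
  have hFSy : FS y ⊆ FS x := by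
    rintro v ⟨H, hH, rfl⟩
    refine ⟨H.biUnion (fun k => Finset.Ico (e k) (e (k + 1))), ?_, ?_⟩
    · obtain ⟨k, hk⟩ := hH
      exact ⟨e k, Finset.mem_biUnion.mpr ⟨k, hk, Finset.mem_Ico.mpr ⟨le_refl _, hlt k⟩⟩⟩
    · rw [Finset.sum_biUnion]
      intro a _ b _ hab
      apply Finset.disjoint_left.mpr
      intro t ht ht'
      simp only [Finset.mem_Ico] at ht ht'
      rcases lt_or_gt_of_ne hab with h | h
      · have : e (a + 1) ≤ e b := hmono.monotone (by omega)
        omega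
      · have : e (b + 1) ≤ e a := hmono.monotone (by omega)
        omega
  -- A meets FS z
  obtain ⟨a, haA, H, hH, haz⟩ := hA (FS z) ⟨z, hzpos, subset_rfl⟩
  refine ⟨m * a, ⟨a, haA, rfl⟩, ?_⟩
  apply hFS
  apply hFSy
  refine ⟨H, hH, ?_⟩
  rw [haz, Finset.mul_sum]
  exact Finset.sum_congr rfl (fun k _ => hzy k)
end

section
/- Let (X, μ, T) be an invertible measure-preserving system and A ⊆ X a measurable set with μ(A) > 0. Then the return times set R(A) = { n ∈ ℤ : μ(A ∩ T⁻ⁿA) > 0 } is an IP_r* set, where r = ⌊1/μ(A)⌋ + 1: that is, for any x₁, …, x_r ∈ ℤ, some nonempty subset H ⊆ {1, …, r} satisfies Σ_{t∈H} x_t ∈ R(A). -/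
open MeasureTheory

/-- The return times set of a measurable set `A` under the `ℤ`-action generated by an
invertible map `T` : `R(A) = { n ∈ ℤ : μ(A ∩ T⁻ⁿ A) > 0 }`, where `T⁻ⁿ A = (Tⁿ)⁻¹ A`. -/
def returnTimes {X : Type*} [MeasurableSpace X] (μ : Measure X) (T : Equiv.Perm X)
    (A : Set X) : Set ℤ :=
  { n : ℤ | 0 < μ (A ∩ (T ^ n) ⁻¹' A) }

lemma mp_zpow {X : Type*} [MeasurableSpace X] (μ : Measure X) (T : Equiv.Perm X)
    (hTμ : MeasurePreserving T μ μ) (hT'μ : MeasurePreserving T.symm μ μ) (n : ℤ) :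
    MeasurePreserving ⇑(T ^ n) μ μ := by
  induction n using Int.induction_on with
  | zero => simpa using MeasurePreserving.id μ
  | succ k ih =>
      have : (T : Equiv.Perm X) ^ ((k : ℤ) + 1) = T ^ (k : ℤ) * T := by
        rw [zpow_add, zpow_one]
      rw [this]
      exact ih.comp hTμ
  | pred k ih =>
      have : (T : Equiv.Perm X) ^ (-(k : ℤ) - 1) = T ^ (-(k : ℤ)) * T⁻¹ := by
        rw [zpow_sub, zpow_one]
      rw [this]
      have hinv : ⇑(T⁻¹ : Equiv.Perm X) = ⇑T.symm := rfl
      have : ⇑(T ^ (-(k : ℤ)) * T⁻¹) = ⇑(T ^ (-(k : ℤ))) ∘ ⇑T.symm := rfl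
      rw [this]
      exact ih.comp hT'μ

/-- For an invertible measure-preserving system `(X, μ, T)` and a measurable set `A`
with `μ(A) > 0`, the return times set `R(A)` is an IP_r* set for `r = ⌊1/μ(A)⌋ + 1`:
for any `x₁, …, x_r ∈ ℤ`, some nonempty `H ⊆ {1, …, r}` satisfies
`Σ_{t ∈ H} x_t ∈ R(A)`. -/
theorem returnTimes_IPrStar
    {X : Type*} [MeasurableSpace X] (μ : Measure X) [IsProbabilityMeasure μ]
    (T : Equiv.Perm X) (hT : Measurable T) (hT' : Measurable T.symm)
    (hTμ : MeasurePreserving T μ μ) (hT'μ : MeasurePreserving T.symm μ μ)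
    (A : Set X) (hA : MeasurableSet A) (hApos : 0 < μ A)
    (r : ℕ) (hr : r = Nat.floor (μ A).toReal⁻¹ + 1) :
    ∀ x : ℕ → ℤ, ∃ H : Finset ℕ, H.Nonempty ∧ H ⊆ Finset.Icc 1 r ∧
      (∑ t ∈ H, x t) ∈ returnTimes μ T A := by
  intro x
  by_contra hcon
  push_neg at hcon
  have mp : ∀ n : ℤ, MeasurePreserving ⇑(T ^ n) μ μ := mp_zpow μ T hTμ hT'μ
  set S : ℕ → ℤ := fun j => ∑ t ∈ Finset.Icc 1 j, x t with hS
  set B : ℕ → Set X := fun j => (⇑(T ^ S j)) ⁻¹' A with hB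
  have hBmeas : ∀ j, MeasurableSet (B j) := fun j => (mp _).measurable hA
  have hBμ : ∀ j, μ (B j) = μ A := fun j => (mp _).measure_preimage hA.nullMeasurableSet
  -- pairwise intersections are null
  have hpair : ∀ i j : ℕ, i < j → j ≤ r → μ (B i ∩ B j) = 0 := by
    intro i j hij hjr
    have hHne : (Finset.Icc (i + 1) j).Nonempty := ⟨i + 1, Finset.mem_Icc.2 (by omega)⟩
    have hHsub : Finset.Icc (i + 1) j ⊆ Finset.Icc 1 r := by
      intro t ht
      simp only [Finset.mem_Icc] at ht ⊢
      omega
    have hH := hcon (Finset.Icc (i + 1) j) hHne hHsub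
    have hd : S i + ∑ t ∈ Finset.Icc (i + 1) j, x t = S j := by
      have h1 : Finset.Icc 1 i = Finset.Ioc 0 i := by
        rw [← Finset.Icc_add_one_left_eq_Ioc, zero_add]
      have h2 : Finset.Icc (i + 1) j = Finset.Ioc i j := by
        rw [← Finset.Icc_add_one_left_eq_Ioc]
      have h3 : Finset.Icc 1 j = Finset.Ioc 0 j := by
        rw [← Finset.Icc_add_one_left_eq_Ioc, zero_add]
      simp only [hS, h1, h2, h3]
      exact Finset.sum_Ioc_consecutive x (Nat.zero_le i) (le_of_lt hij)
    have key : B i ∩ B j = (⇑(T ^ S i)) ⁻¹' (A ∩ (⇑(T ^ (S j - S i))) ⁻¹' A) := by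
      ext y
      simp only [hB, Set.mem_inter_iff, Set.mem_preimage]
      have : (T ^ (S j - S i)) ((T ^ S i) y) = (T ^ S j) y := by
        rw [← Equiv.Perm.mul_apply, ← zpow_add, sub_add_cancel]
      rw [this]
    have hmeas2 : μ (B i ∩ B j) = μ (A ∩ (⇑(T ^ (S j - S i))) ⁻¹' A) := by
      rw [key]
      exact (mp (S i)).measure_preimage
        (hA.inter ((mp _).measurable hA)).nullMeasurableSet
    rw [hmeas2]
    have hsd : S j - S i = ∑ t ∈ Finset.Icc (i + 1) j, x t := by omega
    rw [hsd]
    by_contra h0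
    exact hH (by simpa [returnTimes] using pos_iff_ne_zero.2 h0)
  -- measure of the union equals the sum
  have hdisj : ((Finset.range (r + 1)) : Set ℕ).Pairwise (Function.onFun (AEDisjoint μ) B) := by
    intro i _ j _ hij
    rcases lt_or_gt_of_ne hij with h | h
    · have hj : j ≤ r := by
        have := Finset.mem_range.1 (by assumption : j ∈ (Finset.range (r + 1) : Finset ℕ))
        omega
      exact hpair i j h hj
    · have hi : i ≤ r := by
        have := Finset.mem_range.1 (by assumption : i ∈ (Finset.range (r + 1) : Finset ℕ))
        omega
      have := hpair j i h hi
      simpa [Function.onFun, AEDisjoint, Set.inter_comm] using this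
  have heq : μ (⋃ j ∈ Finset.range (r + 1), B j) = ∑ j ∈ Finset.range (r + 1), μ (B j) :=
    measure_biUnion_finset₀ hdisj (fun j _ => (hBmeas j).nullMeasurableSet)
  have hsum : ∑ j ∈ Finset.range (r + 1), μ (B j) = (r + 1 : ℕ) * μ A := by
    rw [Finset.sum_congr rfl (fun j _ => hBμ j)]
    simp [mul_comm]
  have hle : ((r + 1 : ℕ) : ENNReal) * μ A ≤ 1 := by
    rw [← hsum, ← heq]
    exact le_trans (measure_mono (Set.subset_univ _)) (by simp)
  -- derive the contradiction
  set a : ℝ := (μ A).toReal with ha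
  have hafin : μ A ≠ ⊤ := measure_ne_top μ A
  have hapos : 0 < a := ENNReal.toReal_pos hApos.ne' hafin
  have hlt : a⁻¹ < r := by
    rw [hr]
    push_cast
    exact Nat.lt_floor_add_one a⁻¹
  have h1lt : 1 < (r : ℝ) * a := by
    calc 1 = a⁻¹ * a := by rw [inv_mul_cancel₀ hapos.ne']
    _ < (r : ℝ) * a := by exact mul_lt_mul_of_pos_right hlt hapos
  have hle' : ((r + 1 : ℕ) : ℝ) * a ≤ 1 := by
    have := ENNReal.toReal_mono (by simp) hle
    simp only [ENNReal.toReal_mul, ENNReal.toReal_natCast, ENNReal.toReal_one] at this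
    exact_mod_cast this
  have : (r : ℝ) * a ≤ ((r + 1 : ℕ) : ℝ) * a := by
    apply mul_le_mul_of_nonneg_right _ hapos.le
    push_cast
    linarith
  linarith
end
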